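/- The function α ↦ log |e^{iα} − 1| is Lebesgue integrable on [0, 2π], and for every k ∈ ℤ one has ∫_0^{2π} e^{i k α} · log |e^{iα} − 1| dα = − π / |k| if k ≠ 0, and ∫_0^{2π} log |e^{iα} − 1| dα = 0. -/

import Mathlib

open Real MeasureTheory Set Filter Topology

lemma aux_integral_exp_int (m : ℤ) :
    ∫ α in (0:ℝ)..(2*π), Complex.exp (m * α * Complex.I) =
      if m = 0 then (2*π : ℂ) else 0 := by
  split_ifs with h
  · subst h; simp
  · have hc : (m : ℂ) * Complex.I ≠ 0 := by
      simp [Complex.I_ne_zero, Complex.ofReal_ne_zero, h]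
    have : ∀ α : ℝ, Complex.exp ((m:ℂ) * α * Complex.I)
        = Complex.exp (((m:ℂ) * Complex.I) * α) := by intro α; ring_nf
    simp_rw [this]
    rw [integral_exp_mul_complex hc]
    have h1 : Complex.exp ((m:ℂ) * Complex.I * ((2*π:ℝ):ℂ)) = 1 := by
      rw [show ((m:ℂ) * Complex.I * ((2*π:ℝ):ℂ)) = m * (2*π*Complex.I) by push_cast; ring]
      exact Complex.exp_int_mul_two_pi_mul_I m
    rw [h1]
    simp

-- integrability of |log| on Ioc 0 1
lemma aux_int_abs_log : IntegrableOn (fun x : ℝ => |Real.log x|) (Set.Ioc 0 1) volume := by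
  have hg : IntegrableOn (fun x : ℝ => 2 * x ^ (-1/2 : ℝ)) (Set.Ioc 0 1) volume := by
    have := (intervalIntegral.intervalIntegrable_rpow' (a := 0) (b := 1)
      (r := -1/2) (by norm_num))
    rw [intervalIntegrable_iff_integrableOn_Ioc_of_le (by norm_num)] at this
    exact this.const_mul 2
  refine hg.mono' ?_ ?_
  · exact (Real.measurable_log.abs).aestronglyMeasurable
  · filter_upwards [ae_restrict_mem measurableSet_Ioc] with x hx
    have hx0 : 0 < x := hx.1
    have hx1 : x ≤ 1 := hx.2
    have h1 : Real.log (x ^ (-1/2 : ℝ)) ≤ x ^ (-1/2 : ℝ) :=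
      Real.log_le_self (Real.rpow_nonneg hx0.le _)
    rw [Real.log_rpow hx0] at h1
    have hlx : Real.log x ≤ 0 := Real.log_nonpos hx0.le hx1
    rw [Real.norm_eq_abs, abs_abs, abs_of_nonpos hlx]
    nlinarith

lemma aux_sq_abs (r α : ℝ) :
    (‖1 - r * Complex.exp (α * Complex.I)‖)^2
      = (1 - r * Real.cos α)^2 + (r * Real.sin α)^2 := by
  rw [← Complex.normSq_eq_norm_sq, Complex.normSq_apply]
  simp [Complex.exp_mul_I, Complex.sub_re, Complex.sub_im, Complex.mul_re, Complex.mul_im,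
    Complex.cos_ofReal_re, Complex.sin_ofReal_re]
  ring

lemma aux_sin_half_sq (α : ℝ) : Real.sin (α/2)^2 = (1 - Real.cos α)/2 := by
  have h1 : Real.cos α = 2 * Real.cos (α/2)^2 - 1 := by
    have := Real.cos_two_mul (α/2); rw [show 2*(α/2) = α by ring] at this; linarith
  have h2 := Real.sin_sq_add_cos_sq (α/2)
  linarith

lemma aux_abs_le_two {r : ℝ} (hr0 : 0 ≤ r) (hr1 : r ≤ 1) (α : ℝ) :
    ‖1 - r * Complex.exp (α * Complex.I)‖ ≤ 2 := by
  have h1 : ‖(r:ℂ) * Complex.exp (α * Complex.I)‖ = r := by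
    rw [norm_mul, Complex.norm_exp]
    simp [abs_of_nonneg hr0]
  calc ‖1 - r * Complex.exp (α * Complex.I)‖
      ≤ ‖(1:ℂ)‖ + ‖(r:ℂ) * Complex.exp (α * Complex.I)‖ :=
        norm_sub_le _ _
    _ ≤ 1 + 1 := by rw [norm_one, h1]; linarith
    _ = 2 := by norm_num

lemma aux_sin_le_abs {r : ℝ} (hr0 : 1/2 ≤ r) (hr1 : r ≤ 1) (α : ℝ) :
    Real.sin (α/2) ≤ ‖1 - r * Complex.exp (α * Complex.I)‖ := by
  refine le_of_sq_le_sq ?_ (norm_nonneg _)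
  rw [aux_sq_abs, aux_sin_half_sq]
  have hc := Real.sin_sq_add_cos_sq α
  nlinarith [sq_nonneg (1 - r), Real.cos_le_one α]

lemma aux_abslog_Ioc : IntegrableOn (fun x : ℝ => |Real.log x|) (Set.Ioc 0 (2*π)) volume := by
  have h1 : (1:ℝ) ≤ 2*π := by nlinarith [Real.pi_gt_three]
  rw [← Set.Ioc_union_Ioc_eq_Ioc (le_of_lt one_pos) h1]
  refine (aux_int_abs_log).union ?_
  have hc : ContinuousOn (fun x : ℝ => |Real.log x|) (Set.Icc 1 (2*π)) := by
    refine ContinuousOn.abs (ContinuousOn.log continuousOn_id ?_)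
    intro x hx; exact ne_of_gt (lt_of_lt_of_le one_pos hx.1)
  exact (hc.integrableOn_compact isCompact_Icc).mono_set Set.Ioc_subset_Icc_self

lemma aux_abslog_refl : IntegrableOn (fun x : ℝ => |Real.log (2*π - x)|) (Set.Ioc 0 (2*π)) volume := by
  have h0 : (0:ℝ) ≤ 2*π := by positivity
  have h := aux_abslog_Ioc
  rw [← intervalIntegrable_iff_integrableOn_Ioc_of_le h0] at h ⊢
  have := h.comp_sub_left (2*π)
  simpa using this.symm

lemma aux_bound_integrable : IntegrableOn
    (fun α : ℝ => Real.log 2 + |Real.log (Real.sin (α/2))|) (Set.Ioc 0 (2*π)) volume := by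
  have h0 : (0:ℝ) ≤ 2*π := by positivity
  refine Integrable.add (integrableOn_const (C := Real.log 2) measure_Ioc_lt_top.ne) ?_
  have hG : IntegrableOn (fun α : ℝ => Real.log π + |Real.log α| + |Real.log (2*π - α)|)
      (Set.Ioc 0 (2*π)) volume :=
    ((integrableOn_const (C := Real.log π) measure_Ioc_lt_top.ne).add aux_abslog_Ioc).add aux_abslog_refl
  refine hG.mono' ?_ ?_
  · exact ((Real.measurable_log.comp
      (Real.continuous_sin.measurable.comp (measurable_id.div_const 2))).abs).aestronglyMeasurable
  · filter_upwards [ae_restrict_mem measurableSet_Ioc] with α hα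
    rcases eq_or_lt_of_le hα.2 with h2pi | h2pi
    · -- α = 2π: sin(π) = 0, log 0 = 0
      rw [h2pi]
      have : Real.sin (2*π/2) = 0 := by rw [show (2*π/2) = π by ring]; exact Real.sin_pi
      rw [this]
      simp only [Real.log_zero, abs_zero, Real.norm_eq_abs, abs_zero, add_zero]
      have h4 : (0:ℝ) ≤ Real.log π := Real.log_nonneg (by nlinarith [Real.pi_gt_three])
      have h5 := abs_nonneg (Real.log (2*π))
      have h6 := abs_nonneg (Real.log (2*π - 2*π))
      linarith
    · -- α ∈ Ioo 0 2π
      have hα0 := hα.1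
      have key : ∀ β : ℝ, 0 < β → β ≤ π → |Real.log (Real.sin (β/2))| ≤ Real.log π + |Real.log β| := by
        intro β hb0 hbπ
        have hs1 : β/π ≤ Real.sin (β/2) := by
          have := Real.mul_le_sin (x := β/2) (by linarith) (by linarith)
          calc β/π = 2/π * (β/2) := by field_simp
            _ ≤ Real.sin (β/2) := this
        have hspos : 0 < Real.sin (β/2) := lt_of_lt_of_le (by positivity) hs1
        have hsle : Real.sin (β/2) ≤ 1 := Real.sin_le_one _
        have hlogs : Real.log (Real.sin (β/2)) ≤ 0 := Real.log_nonpos hspos.le hsle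
        rw [abs_of_nonpos hlogs]
        have : Real.log (β/π) ≤ Real.log (Real.sin (β/2)) :=
          Real.log_le_log (by positivity) hs1
        rw [Real.log_div (ne_of_gt hb0) (ne_of_gt Real.pi_pos)] at this
        have := neg_le_neg this
        calc -Real.log (Real.sin (β/2)) ≤ Real.log π - Real.log β := by linarith
          _ ≤ Real.log π + |Real.log β| := by linarith [neg_abs_le (Real.log β)]
      rw [Real.norm_eq_abs, abs_abs]
      rcases le_total α π with hcase | hcase
      · have := key α hα0 hcase
        have h3 : (0:ℝ) ≤ |Real.log (2*π - α)| := abs_nonneg _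
        linarith
      · have hβ0 : 0 < 2*π - α := by linarith
        have hβπ : 2*π - α ≤ π := by linarith
        have hrw : Real.sin (α/2) = Real.sin ((2*π - α)/2) := by
          rw [show (2*π - α)/2 = π - α/2 by ring, Real.sin_pi_sub]
        rw [hrw]
        have := key _ hβ0 hβπ
        have h3 : (0:ℝ) ≤ |Real.log α| := abs_nonneg _
        linarith

noncomputable def FF (k : ℤ) (r : ℝ) (n : ℕ) (α : ℝ) : ℂ :=
  Complex.exp ((k:ℂ) * α * Complex.I) * (-(1:ℂ)/2) *
    (((r:ℂ) * Complex.exp (α * Complex.I))^n / n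
      + ((r:ℂ) * Complex.exp (-α * Complex.I))^n / n)

-- pointwise HasSum
lemma FF_hasSum (k : ℤ) {r : ℝ} (hr0 : 0 ≤ r) (hr1 : r < 1) (α : ℝ) :
    HasSum (fun n => FF k r n α)
      (Complex.exp ((k:ℂ) * α * Complex.I) *
        (Real.log (‖1 - r * Complex.exp (α * Complex.I)‖) : ℂ)) := by
  set z : ℂ := (r:ℂ) * Complex.exp (α * Complex.I) with hz_def
  have hnz : ‖z‖ < 1 := by
    rw [hz_def, norm_mul, Complex.norm_exp]
    simp only [Complex.mul_I_re, Complex.ofReal_im, neg_zero, Real.exp_zero, mul_one,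
      Complex.norm_real, Real.norm_eq_abs]
    rwa [_root_.abs_of_nonneg hr0]
  have h1 : HasSum (fun n : ℕ => z^n/n) (-Complex.log (1 - z)) :=
    Complex.hasSum_taylorSeries_neg_log hnz
  have h2 : HasSum (fun n : ℕ => (starRingEnd ℂ z)^n/n)
      (-(starRingEnd ℂ) (Complex.log (1 - z))) := by
    have := h1.map (starRingEnd ℂ) (Complex.continuous_conj)
    simp only [Function.comp_def, map_div₀, map_pow, Complex.conj_natCast] at this
    exact this
  have hconj : starRingEnd ℂ z = (r:ℂ) * Complex.exp (-α * Complex.I) := by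
    rw [hz_def, map_mul, ← Complex.exp_conj]
    congr 1
    · exact Complex.conj_ofReal r
    · congr 1
      simp [Complex.ext_iff]
  have h3 := (h1.add h2).mul_left (Complex.exp ((k:ℂ) * α * Complex.I) * (-(1:ℂ)/2))
  have heq : (Complex.exp ((k:ℂ) * α * Complex.I) * (-(1:ℂ)/2)) *
      (-Complex.log (1 - z) + -(starRingEnd ℂ) (Complex.log (1 - z)))
      = Complex.exp ((k:ℂ) * α * Complex.I) *
        (Real.log (‖1 - z‖) : ℂ) := by
    have hre : Complex.log (1 - z) + (starRingEnd ℂ) (Complex.log (1 - z))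
        = 2 * ((Complex.log (1 - z)).re : ℂ) := by
      rw [Complex.add_conj]; push_cast; ring
    have : (Complex.log (1 - z)).re = Real.log (‖1 - z‖) := Complex.log_re _
    rw [← this]
    rw [show -Complex.log (1-z) + -(starRingEnd ℂ) (Complex.log (1-z))
        = -(Complex.log (1-z) + (starRingEnd ℂ) (Complex.log (1-z))) by ring, hre]
    ring
  rw [heq] at h3
  convert h3 using 2 with n
  · rfl
  · rw [FF, hconj]

lemma FF_cont (k : ℤ) (r : ℝ) (n : ℕ) : Continuous (FF k r n) := by
  unfold FF; fun_prop

lemma FF_integral (k : ℤ) (r : ℝ) (n : ℕ) :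
    ∫ α in (0:ℝ)..(2*π), FF k r n α
      = if (n = k.natAbs ∧ k ≠ 0) then -(π:ℂ) * (r:ℂ)^n / n else 0 := by
  have e1 : ∀ α : ℝ, Complex.exp ((k:ℂ)*α*Complex.I) * Complex.exp ((n:ℂ)*(α*Complex.I))
      = Complex.exp (((k+n:ℤ):ℂ)*α*Complex.I) := by
    intro α; rw [← Complex.exp_add]; congr 1; push_cast; ring
  have e2 : ∀ α : ℝ, Complex.exp ((k:ℂ)*α*Complex.I) * Complex.exp ((n:ℂ)*(-α*Complex.I))
      = Complex.exp (((k-n:ℤ):ℂ)*α*Complex.I) := by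
    intro α; rw [← Complex.exp_add]; congr 1; push_cast; ring
  have expand : ∀ α : ℝ, FF k r n α = (-(r:ℂ)^n/(2*n)) *
      (Complex.exp (((k+n:ℤ):ℂ)*α*Complex.I) + Complex.exp (((k-n:ℤ):ℂ)*α*Complex.I)) := by
    intro α
    rw [show (-(r:ℂ)^n/(2*n)) * (Complex.exp (((k+n:ℤ):ℂ)*α*Complex.I)
        + Complex.exp (((k-n:ℤ):ℂ)*α*Complex.I))
      = (-(r:ℂ)^n/(2*n)) * (Complex.exp ((k:ℂ)*α*Complex.I) * Complex.exp ((n:ℂ)*(α*Complex.I))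
        + Complex.exp ((k:ℂ)*α*Complex.I) * Complex.exp ((n:ℂ)*(-α*Complex.I)))
      by rw [e1, e2]]
    rw [FF, mul_pow, mul_pow, ← Complex.exp_nat_mul, ← Complex.exp_nat_mul]
    ring
  simp_rw [expand]
  rw [intervalIntegral.integral_const_mul, intervalIntegral.integral_add
    ((by fun_prop : Continuous fun α : ℝ => Complex.exp (((k+n:ℤ):ℂ)*α*Complex.I)).intervalIntegrable _ _)
    ((by fun_prop : Continuous fun α : ℝ => Complex.exp (((k-n:ℤ):ℂ)*α*Complex.I)).intervalIntegrable _ _),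
    aux_integral_exp_int, aux_integral_exp_int]
  by_cases h1 : k + (n:ℤ) = 0 <;> by_cases h2 : k - (n:ℤ) = 0
  · have hn : n = 0 := by omega
    have hk : k = 0 := by omega
    simp [hn, hk]
  · have hn : n = k.natAbs := by omega
    have hk : k ≠ 0 := by omega
    have hnz : (n:ℂ) ≠ 0 := by
      have : n ≠ 0 := by omega
      exact_mod_cast Nat.cast_ne_zero.mpr this
    rw [if_pos h1, if_neg h2, if_pos (⟨hn, hk⟩ : n = k.natAbs ∧ k ≠ 0)]
    push_cast
    field_simp
    ring
  · have hn : n = k.natAbs := by omega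
    have hk : k ≠ 0 := by omega
    have hnz : (n:ℂ) ≠ 0 := by
      have : n ≠ 0 := by omega
      exact_mod_cast Nat.cast_ne_zero.mpr this
    rw [if_neg h1, if_pos h2, if_pos (⟨hn, hk⟩ : n = k.natAbs ∧ k ≠ 0)]
    push_cast
    field_simp
    ring
  · rw [if_neg h1, if_neg h2, if_neg]
    · simp
    · rintro ⟨hn, hk⟩
      omega

lemma aux_key (k : ℤ) {r : ℝ} (hr0 : 0 ≤ r) (hr1 : r < 1) :
    ∫ α in (0:ℝ)..(2*π), Complex.exp ((k:ℂ)*α*Complex.I) *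
        (Real.log (‖1 - r * Complex.exp (α * Complex.I)‖) : ℂ)
      = if k = 0 then 0 else -(π:ℂ) * (r:ℂ)^(k.natAbs) / (k.natAbs : ℂ) := by
  have h2pi : (0:ℝ) ≤ 2*π := by positivity
  set μ := volume.restrict (Set.Ioc (0:ℝ) (2*π)) with hμ
  have hint : ∀ n, Integrable (FF k r n) μ := fun n =>
    ((FF_cont k r n).integrableOn_Ioc)
  have hterm : ∀ (n : ℕ) (w : ℂ), ‖w‖ ≤ r → ‖w^n/(n:ℂ)‖ ≤ r^n := by
    intro n w hw
    cases n with
    | zero => simp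
    | succ m =>
      rw [norm_div, norm_pow, Complex.norm_natCast]
      have h1 : ‖w‖ ^ (m+1) ≤ r^(m+1) :=
        pow_le_pow_left₀ (norm_nonneg w) hw _
      have h2 : (1:ℝ) ≤ ((m+1 : ℕ):ℝ) := by exact_mod_cast Nat.one_le_iff_ne_zero.mpr (Nat.succ_ne_zero m)
      have hr' : (0:ℝ) ≤ r := le_trans (norm_nonneg w) hw
      calc ‖w‖ ^ (m+1) / ((m+1:ℕ):ℝ) ≤ r^(m+1) / 1 :=
            div_le_div₀ (by positivity) h1 one_pos h2
        _ = r^(m+1) := by ring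
  have habs1 : ∀ α : ℝ, ‖Complex.exp ((k:ℂ)*α*Complex.I)‖ = 1 := by
    intro α
    rw [Complex.norm_exp]
    rw [show ((k:ℂ)*α*Complex.I) = (((k*α : ℝ)):ℂ) * Complex.I by push_cast; ring]
    simp
  have habsz : ∀ α : ℝ, ‖(r:ℂ) * Complex.exp (α*Complex.I)‖ ≤ r := by
    intro α
    rw [norm_mul, Complex.norm_exp]
    simp [Complex.mul_I_re, _root_.abs_of_nonneg hr0]
  have habsz' : ∀ α : ℝ, ‖(r:ℂ) * Complex.exp (-α*Complex.I)‖ ≤ r := by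
    intro α
    have := habsz (-α)
    rwa [Complex.ofReal_neg] at this
  have hFFbound : ∀ (n : ℕ) (α : ℝ), ‖FF k r n α‖ ≤ r^n := by
    intro n α
    rw [FF, norm_mul, norm_mul, habs1]
    have hhalf : ‖(-(1:ℂ)/2)‖ = 1/2 := by norm_num
    rw [hhalf, one_mul]
    have hb : ‖((r:ℂ) * Complex.exp (α*Complex.I))^n/(n:ℂ)
        + ((r:ℂ) * Complex.exp (-α*Complex.I))^n/(n:ℂ)‖ ≤ r^n + r^n :=
      (norm_add_le _ _).trans (add_le_add (hterm n _ (habsz α)) (hterm n _ (habsz' α)))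
    calc 1/2 * ‖((r:ℂ) * Complex.exp (α*Complex.I))^n/(n:ℂ)
        + ((r:ℂ) * Complex.exp (-α*Complex.I))^n/(n:ℂ)‖ ≤ 1/2 * (r^n + r^n) := by linarith
      _ = r^n := by ring
  have hsum : Summable (fun n : ℕ => ∫ α, ‖FF k r n α‖ ∂μ) := by
    have hg : Summable (fun n : ℕ => (2*π) * r^n) :=
      (summable_geometric_of_lt_one hr0 hr1).mul_left _
    refine Summable.of_nonneg_of_le
      (fun n => integral_nonneg (fun α => norm_nonneg _)) (fun n => ?_) hg
    have hci : Integrable (fun _ : ℝ => r^n) μ := integrable_const _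
    refine (integral_mono ((hint n).norm) hci (fun α => hFFbound n α)).trans ?_
    rw [integral_const]
    rw [hμ, measureReal_restrict_apply_univ, Measure.real, Real.volume_Ioc, smul_eq_mul]
    rw [ENNReal.toReal_ofReal (by linarith)]
    ring_nf
    exact le_refl _
  have H := hasSum_integral_of_summable_integral_norm hint hsum
  have htsum : ∀ α : ℝ, ∑' n, FF k r n α = Complex.exp ((k:ℂ)*α*Complex.I) *
      ((Real.log (‖1 - r * Complex.exp (α*Complex.I)‖) : ℝ) : ℂ) :=
    fun α => (FF_hasSum k hr0 hr1 α).tsum_eq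
  simp_rw [htsum] at H
  have hval : (fun n : ℕ => ∫ α, FF k r n α ∂μ)
      = (fun n : ℕ => if (n = k.natAbs ∧ k ≠ 0) then -(π:ℂ) * (r:ℂ)^n / n else 0) := by
    funext n
    rw [hμ, ← intervalIntegral.integral_of_le h2pi, FF_integral]
  rw [hval] at H
  rw [intervalIntegral.integral_of_le h2pi]
  by_cases hk : k = 0
  · subst hk
    have H0 : HasSum (fun n : ℕ => (if (n = (0:ℤ).natAbs ∧ (0:ℤ) ≠ 0)
        then -(π:ℂ) * (r:ℂ)^n / n else 0)) 0 := by
      simpa using hasSum_zero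
    rw [if_pos rfl]
    exact (H.unique H0)
  · have He : (fun n : ℕ => if (n = k.natAbs ∧ k ≠ 0) then -(π:ℂ) * (r:ℂ)^n / n else 0)
        = (fun n : ℕ => if n = k.natAbs then -(π:ℂ) * (r:ℂ)^(k.natAbs) / (k.natAbs:ℂ) else 0) := by
      funext n
      by_cases h : n = k.natAbs
      · subst h; simp [hk]
      · simp [h]
    rw [He] at H
    have H1 : HasSum (fun n : ℕ => if n = k.natAbs
          then -(π:ℂ) * (r:ℂ)^(k.natAbs) / (k.natAbs:ℂ) else 0)
        (-(π:ℂ) * (r:ℂ)^(k.natAbs) / (k.natAbs:ℂ)) := hasSum_ite_eq k.natAbs _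
    rw [if_neg hk]
    exact H.unique H1

lemma aux_log_bound {r α : ℝ} (hr0 : 1/2 ≤ r) (hr1 : r ≤ 1) (hs : 0 < Real.sin (α/2)) :
    |Real.log (‖1 - r * Complex.exp (α*Complex.I)‖)|
      ≤ Real.log 2 + |Real.log (Real.sin (α/2))| := by
  have hA1 := aux_sin_le_abs hr0 hr1 α
  have hA2 := aux_abs_le_two (by linarith) hr1 α
  set A := ‖1 - r * Complex.exp (α*Complex.I)‖ with hA
  have hApos : 0 < A := lt_of_lt_of_le hs hA1
  have hlog2 : (0:ℝ) ≤ Real.log 2 := Real.log_nonneg one_le_two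
  rw [abs_le]
  constructor
  · have h1 : Real.log (Real.sin (α/2)) ≤ Real.log A := Real.log_le_log hs hA1
    have h2 := neg_abs_le (Real.log (Real.sin (α/2)))
    linarith
  · have h1 : Real.log A ≤ Real.log 2 := Real.log_le_log hApos hA2
    linarith [abs_nonneg (Real.log (Real.sin (α/2)))]

lemma aux_exp_norm (k : ℤ) (α : ℝ) : ‖Complex.exp ((k:ℂ)*α*Complex.I)‖ = 1 := by
  rw [Complex.norm_exp,
    show ((k:ℂ)*α*Complex.I) = (((k*α : ℝ)):ℂ) * Complex.I by push_cast; ring]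
  simp

lemma aux_limit (k : ℤ) :
    ∫ α in (0:ℝ)..(2*π), Complex.exp ((k:ℂ)*α*Complex.I) *
        (Real.log (‖1 - Complex.exp (α * Complex.I)‖) : ℂ)
      = if k = 0 then 0 else -(π:ℂ) / (k.natAbs : ℂ) := by
  have h2pi : (0:ℝ) ≤ 2*π := by positivity
  rw [intervalIntegral.integral_of_le h2pi]
  set μ := volume.restrict (Set.Ioc (0:ℝ) (2*π)) with hμ
  set l : Filter ℝ := nhdsWithin 1 (Set.Iio 1) with hl
  have hae : ∀ᵐ α ∂μ, α ∈ Set.Ioo (0:ℝ) (2*π) := by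
    have h1 : ∀ᵐ α ∂μ, α ∈ Set.Ioc (0:ℝ) (2*π) := ae_restrict_mem measurableSet_Ioc
    have h2 : ∀ᵐ α ∂μ, α ≠ 2*π := by
      refine ae_iff.mpr ?_
      have he : {α : ℝ | ¬ α ≠ 2*π} = {2*π} := by ext; simp
      rw [he]
      exact le_antisymm ((Measure.restrict_apply_le _ _).trans (by simp)) (zero_le)
    filter_upwards [h1, h2] with α hα hne
    exact ⟨hα.1, lt_of_le_of_ne hα.2 hne⟩
  have hsin : ∀ α ∈ Set.Ioo (0:ℝ) (2*π), 0 < Real.sin (α/2) := by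
    intro α hα
    exact Real.sin_pos_of_pos_of_lt_pi (by linarith [hα.1]) (by linarith [hα.2])
  have hbint : Integrable (fun α : ℝ => Real.log 2 + |Real.log (Real.sin (α/2))|) μ :=
    aux_bound_integrable
  have hmeas : ∀ r : ℝ, AEStronglyMeasurable (fun α : ℝ => Complex.exp ((k:ℂ)*α*Complex.I) *
      (Real.log (‖1 - r * Complex.exp (α*Complex.I)‖) : ℂ)) μ := by
    intro r
    refine AEStronglyMeasurable.mul ?_ ?_
    · exact ((by fun_prop : Continuous fun α : ℝ =>
        Complex.exp ((k:ℂ)*α*Complex.I))).aestronglyMeasurable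
    · refine Measurable.aestronglyMeasurable ?_
      exact Complex.measurable_ofReal.comp (Real.measurable_log.comp
        ((continuous_norm.comp (by fun_prop : Continuous fun α : ℝ =>
          (1 - r * Complex.exp (α*Complex.I)))).measurable))
  have hIoo : Set.Ioo (1/2 : ℝ) 1 ∈ l := Ioo_mem_nhdsLT_of_mem (by norm_num)
  have hbound : ∀ᶠ r : ℝ in l, ∀ᵐ α : ℝ ∂μ, ‖Complex.exp ((k:ℂ)*α*Complex.I) *
      (Real.log (‖1 - r * Complex.exp (α*Complex.I)‖) : ℂ)‖
        ≤ Real.log 2 + |Real.log (Real.sin (α/2))| := by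
    filter_upwards [hIoo] with r hr
    filter_upwards [hae] with α hα
    rw [norm_mul, aux_exp_norm, one_mul, Complex.norm_real, Real.norm_eq_abs]
    exact aux_log_bound hr.1.le hr.2.le (hsin α hα)
  have hlim : ∀ᵐ α : ℝ ∂μ, Tendsto (fun r : ℝ => Complex.exp ((k:ℂ)*α*Complex.I) *
      (Real.log (‖1 - r * Complex.exp (α*Complex.I)‖) : ℂ)) l
      (𝓝 (Complex.exp ((k:ℂ)*α*Complex.I) *
        (Real.log (‖1 - Complex.exp (α*Complex.I)‖) : ℂ))) := by
    filter_upwards [hae] with α hα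
    have hA1 : 0 < ‖1 - (1:ℝ) * Complex.exp (α*Complex.I)‖ :=
      lt_of_lt_of_le (hsin α hα) (aux_sin_le_abs (by norm_num) le_rfl α)
    have hcontA : Continuous (fun r : ℝ => ‖1 - r * Complex.exp (α*Complex.I)‖) :=
      continuous_norm.comp (by fun_prop)
    have hct : ContinuousAt (fun r : ℝ => Complex.exp ((k:ℂ)*α*Complex.I) *
        (Real.log (‖1 - r * Complex.exp (α*Complex.I)‖) : ℂ)) 1 := by
      refine ContinuousAt.mul continuousAt_const ?_
      refine Complex.continuous_ofReal.continuousAt.comp ?_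
      have h5 : ContinuousAt Real.log
          (‖1 - (1:ℝ) * Complex.exp (α*Complex.I)‖) :=
        Real.continuousAt_log (ne_of_gt hA1)
      exact ContinuousAt.comp (x := (1:ℝ)) h5 hcontA.continuousAt
    have := hct.tendsto.mono_left (nhdsWithin_le_nhds : l ≤ 𝓝 1)
    simpa using this
  have hDCT := tendsto_integral_filter_of_dominated_convergence _ (Eventually.of_forall hmeas)
    hbound hbint hlim
  have heq : ∀ᶠ r : ℝ in l, (∫ α, Complex.exp ((k:ℂ)*α*Complex.I) *
      (Real.log (‖1 - r * Complex.exp (α*Complex.I)‖) : ℂ) ∂μ)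
      = if k = 0 then 0 else -(π:ℂ) * (r:ℂ)^(k.natAbs) / (k.natAbs : ℂ) := by
    filter_upwards [hIoo] with r hr
    rw [hμ, ← intervalIntegral.integral_of_le h2pi]
    exact aux_key k (by linarith [hr.1]) hr.2
  have h2 : Tendsto (fun r : ℝ => if k = 0 then (0:ℂ)
      else -(π:ℂ) * (r:ℂ)^(k.natAbs) / (k.natAbs : ℂ)) l
      (𝓝 (if k = 0 then 0 else -(π:ℂ) / (k.natAbs : ℂ))) := by
    by_cases hk : k = 0
    · simp only [hk, if_true, if_pos]
      exact tendsto_const_nhds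
    · simp only [if_neg hk]
      have hc : Continuous (fun r : ℝ => -(π:ℂ) * (r:ℂ)^(k.natAbs) / (k.natAbs : ℂ)) := by
        fun_prop
      have := (hc.tendsto 1).mono_left (nhdsWithin_le_nhds : l ≤ 𝓝 1)
      simpa using this
  exact tendsto_nhds_unique (Tendsto.congr' heq hDCT) h2
theorem integral_exp_mul_log_abs_exp_sub_one :
    IntegrableOn (fun α : ℝ =>
        Real.log (‖Complex.exp ((α : ℂ) * Complex.I) - 1‖))
      (Set.Icc 0 (2 * π)) volume ∧
    ∀ k : ℤ,
      (k ≠ 0 →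
        ∫ α in (0:ℝ)..(2 * π),
            Complex.exp ((k : ℂ) * (α : ℂ) * Complex.I) *
              (Real.log (‖Complex.exp ((α : ℂ) * Complex.I) - 1‖) : ℂ)
          = -(π : ℂ) / (k.natAbs : ℂ)) ∧
      (∫ α in (0:ℝ)..(2 * π),
          Real.log (‖Complex.exp ((α : ℂ) * Complex.I) - 1‖) = 0) := by
  have habs : ∀ α : ℝ, ‖Complex.exp ((α:ℂ) * Complex.I) - 1‖
      = ‖1 - Complex.exp ((α:ℂ) * Complex.I)‖ :=
    fun α => norm_sub_rev _ _
  have hae : ∀ᵐ α ∂(volume.restrict (Set.Ioc (0:ℝ) (2*π))), α ∈ Set.Ioo (0:ℝ) (2*π) := by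
    have h1 : ∀ᵐ α ∂(volume.restrict (Set.Ioc (0:ℝ) (2*π))), α ∈ Set.Ioc (0:ℝ) (2*π) :=
      ae_restrict_mem measurableSet_Ioc
    have h2 : ∀ᵐ α ∂(volume.restrict (Set.Ioc (0:ℝ) (2*π))), α ≠ 2*π := by
      refine ae_iff.mpr ?_
      have he : {α : ℝ | ¬ α ≠ 2*π} = {2*π} := by ext; simp
      rw [he]
      exact le_antisymm ((Measure.restrict_apply_le _ _).trans (by simp)) (zero_le)
    filter_upwards [h1, h2] with α hα hne
    exact ⟨hα.1, lt_of_le_of_ne hα.2 hne⟩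
  constructor
  · rw [integrableOn_Icc_iff_integrableOn_Ioc]
    refine aux_bound_integrable.mono' ?_ ?_
    · refine Measurable.aestronglyMeasurable ?_
      exact Real.measurable_log.comp (continuous_norm.comp
        (by fun_prop : Continuous fun α : ℝ =>
          Complex.exp ((α:ℂ) * Complex.I) - 1)).measurable
    · filter_upwards [hae] with α hα
      have hs : 0 < Real.sin (α/2) :=
        Real.sin_pos_of_pos_of_lt_pi (by linarith [hα.1]) (by linarith [hα.2])
      rw [Real.norm_eq_abs, habs α]
      have := aux_log_bound (r := 1) (α := α) (by norm_num) le_rfl hs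
      simpa using this
  · intro k
    constructor
    · intro hk
      have h := aux_limit k
      rw [if_neg hk] at h
      simp_rw [habs]
      exact h
    · have h := aux_limit 0
      simp only [Int.cast_zero, zero_mul, Complex.exp_zero, one_mul, if_pos rfl] at h
      simp_rw [habs]
      have h2 := intervalIntegral.integral_ofReal
        (f := fun α : ℝ => Real.log (‖1 - Complex.exp ((α:ℂ) * Complex.I)‖))
        (a := 0) (b := 2*π) (μ := volume)
      rw [h2] at h
      simp only [if_true] at h
      exact_mod_cast h
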